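/- Let d be a positive integer and \alpha an irrational real number. Then there exist infinitely many pairs (b, r) with b an integer and r a positive integer such that gcd(r, b*d) = 1 and |\alpha - b/r| \le 6 d^2 / r^2. -/

import Mathlib

lemma exists_coprime_k (d a q : ℕ) (hd : 0 < d) (ha : 0 < a) (h : Nat.Coprime a q) :
    ∃ k, 0 < k ∧ k ≤ d ∧ Nat.Coprime (a + q * k) d := by
  have hd0 : d ≠ 0 := hd.ne'
  have ha0 : a ≠ 0 := ha.ne'
  set g := Nat.gcd d (a ^ d) with hg
  have hgd : g ∣ d := Nat.gcd_dvd_left _ _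
  have hg0 : 0 < g := Nat.gcd_pos_of_pos_left _ hd
  set k := d / g with hk
  have hk0 : 0 < k := Nat.div_pos (Nat.le_of_dvd hd hgd) hg0
  refine ⟨k, hk0, Nat.div_le_self _ _, ?_⟩
  have hkfact : k.factorization = d.factorization - g.factorization :=
    Nat.factorization_div hgd
  have hgfact : g.factorization = d.factorization ⊓ (a ^ d).factorization :=
    Nat.factorization_gcd hd0 (pow_ne_zero _ ha0)
  by_contra hcop
  set ℓ := (Nat.gcd (a + q * k) d).minFac with hℓ
  have hp : ℓ.Prime := Nat.minFac_prime hcop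
  have hℓg : ℓ ∣ Nat.gcd (a + q * k) d := Nat.minFac_dvd _
  have hℓak : ℓ ∣ a + q * k := hℓg.trans (Nat.gcd_dvd_left _ _)
  have hℓd : ℓ ∣ d := hℓg.trans (Nat.gcd_dvd_right _ _)
  have hkℓ : k.factorization ℓ = d.factorization ℓ -
      min (d.factorization ℓ) (d * a.factorization ℓ) := by
    rw [hkfact, Finsupp.tsub_apply, hgfact, Finsupp.inf_apply, Nat.factorization_pow,
      Finsupp.smul_apply, smul_eq_mul]
  by_cases hℓa : ℓ ∣ a
  · have hνa : 0 < a.factorization ℓ := hp.factorization_pos_of_dvd ha0 hℓa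
    have hle : d.factorization ℓ ≤ d * a.factorization ℓ :=
      le_trans (Nat.factorization_lt ℓ hd0).le (Nat.le_mul_of_pos_right d hνa)
    have hkℓ0 : k.factorization ℓ = 0 := by omega
    have hℓk : ¬ ℓ ∣ k := fun hdvd =>
      absurd (hp.factorization_pos_of_dvd hk0.ne' hdvd) (by omega)
    have hℓq : ¬ ℓ ∣ q := fun hdvd => hp.one_lt.ne' (Nat.eq_one_of_dvd_one (h ▸ Nat.dvd_gcd hℓa hdvd))
    have hqk : ℓ ∣ q * k := by
      have := Nat.dvd_sub hℓak hℓa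
      simpa using this
    rcases (Nat.Prime.dvd_mul hp).mp hqk with h' | h'
    · exact hℓq h'
    · exact hℓk h'
  · have hνa0 : a.factorization ℓ = 0 := Nat.factorization_eq_zero_of_not_dvd hℓa
    have hν1 : 0 < d.factorization ℓ := hp.factorization_pos_of_dvd hd0 hℓd
    have hℓk : ℓ ∣ k := by
      rw [hνa0, mul_zero, Nat.min_zero] at hkℓ
      exact Nat.dvd_of_factorization_pos (by omega)
    have hℓa' : ℓ ∣ a := by
      have := Nat.dvd_sub hℓak (Dvd.dvd.mul_left hℓk q)
      simpa using this
    exact hℓa hℓa'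

lemma finite_bdd_den (α : ℝ) (M : ℕ) :
    {x : ℚ | |α - x| < 1 / (x.den : ℝ) ^ 2 ∧ x.den ≤ M}.Finite := by
  set C : ℤ := (⌈|α|⌉ + 1) * M with hC
  have hfin : ((Set.Icc (-C) C) ×ˢ (Set.Icc 1 M)).Finite :=
    (Set.finite_Icc _ _).prod (Set.finite_Icc _ _)
  have hinj : Function.Injective (fun x : ℚ => ((x.num, x.den) : ℤ × ℕ)) := by
    intro a b h
    exact Rat.ext (congrArg Prod.fst h) (congrArg Prod.snd h)
  refine ((hfin.preimage hinj.injOn)).subset ?_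
  rintro x ⟨hx1, hx2⟩
  have hden1 : 1 ≤ x.den := x.pos
  have hdenR : (1 : ℝ) ≤ (x.den : ℝ) := by exact_mod_cast hden1
  have hxb : |(x : ℝ)| ≤ |α| + 1 := by
    have h2 : 1 / (x.den : ℝ) ^ 2 ≤ 1 := by
      rw [div_le_one (by positivity)]
      nlinarith
    have h3 := abs_sub_abs_le_abs_sub (x : ℝ) α
    rw [abs_sub_comm] at h3
    linarith [hx1.le.trans h2]
  have hnum : |(x.num : ℝ)| ≤ (|α| + 1) * x.den := by
    have : (x : ℝ) = (x.num : ℝ) / (x.den : ℝ) := by rw [Rat.cast_def]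
    rw [this, abs_div, abs_of_pos (by positivity : (0:ℝ) < (x.den:ℝ)),
      div_le_iff₀ (by positivity)] at hxb
    linarith
  have hnumC : |x.num| ≤ C := by
    have hMR : ((x.den : ℝ)) ≤ (M : ℝ) := by exact_mod_cast hx2
    have hceil : |α| ≤ (⌈|α|⌉ : ℝ) := Int.le_ceil _
    have : |(x.num : ℝ)| ≤ (C : ℝ) := by
      calc |(x.num : ℝ)| ≤ (|α| + 1) * x.den := hnum
      _ ≤ ((⌈|α|⌉ : ℝ) + 1) * M := by
          apply mul_le_mul (by linarith) hMR (by positivity) (by positivity)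
      _ = (C : ℝ) := by push_cast [hC]; ring
    exact_mod_cast this
  exact ⟨Set.mem_Icc.mpr (abs_le.mp hnumC), Set.mem_Icc.mpr ⟨hden1, hx2⟩⟩

lemma key_step (d : ℕ) (hd : 0 < d) (α : ℝ) (hα : Irrational α) (N : ℕ) :
    ∃ pr : ℤ × ℕ, (0 < pr.2 ∧ Int.gcd (pr.2 : ℤ) (pr.1 * (d : ℤ)) = 1 ∧
      |α - (pr.1 : ℝ) / (pr.2 : ℝ)| ≤ 6 * (d : ℝ) ^ 2 / (pr.2 : ℝ) ^ 2) ∧ N < pr.2 := by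
  have hT := Real.infinite_rat_abs_sub_lt_one_div_den_sq_of_irrational hα
  obtain ⟨x, hxT, hxB⟩ := (hT.diff (finite_bdd_den α (N + 2))).nonempty
  have hx1 : |α - (x : ℝ)| < 1 / (x.den : ℝ) ^ 2 := hxT
  have hden : N + 2 < x.den := by
    by_contra hcon
    exact hxB ⟨hx1, by omega⟩
  set q : ℕ := x.den with hqdef
  set p : ℤ := x.num with hpdef
  have hq2 : 2 ≤ q := by omega
  have hqN : N < q := by omega
  have hq0Z : (q : ℤ) ≠ 0 := by positivity
  have hcoZ : IsCoprime p (q : ℤ) := by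
    rw [Int.isCoprime_iff_gcd_eq_one]
    simpa [Int.gcd] using x.reduced
  obtain ⟨u, v, huv⟩ := hcoZ
  set q₀Z : ℤ := u % (q : ℤ) with hq₀Zdef
  have hq₀nonneg : 0 ≤ q₀Z := Int.emod_nonneg u hq0Z
  have hq₀lt : q₀Z < (q : ℤ) := Int.emod_lt_of_pos u (by positivity)
  have hq₀ne : q₀Z ≠ 0 := by
    intro h0
    have hdvd : (q : ℤ) ∣ u := Int.dvd_of_emod_eq_zero h0
    obtain ⟨t, rfl⟩ := hdvd
    have : (q : ℤ) ∣ 1 := ⟨t * p + v, by linear_combination -huv⟩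
    have := Int.le_of_dvd one_pos this
    omega
  set p₀ : ℤ := -v - p * (u / (q : ℤ)) with hp₀def
  have det0 : p * q₀Z - p₀ * (q : ℤ) = 1 := by
    have hmod : q₀Z = u - (q : ℤ) * (u / (q : ℤ)) := Int.emod_def u (q : ℤ)
    rw [hmod, hp₀def]
    linear_combination huv
  set q₀ : ℕ := q₀Z.toNat with hq₀def
  have hcast : (q₀ : ℤ) = q₀Z := Int.toNat_of_nonneg hq₀nonneg
  have hq₀1 : 1 ≤ q₀ := by omega
  have hq₀q : q₀ < q := by omega
  have hcopq₀q : Nat.Coprime q₀ q := by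
    have : IsCoprime (q₀ : ℤ) (q : ℤ) := ⟨p, -p₀, by rw [hcast]; linear_combination det0⟩
    exact Nat.isCoprime_iff_coprime.mp this
  obtain ⟨k, hk1, hkd, hkcop⟩ := exists_coprime_k d q₀ q hd hq₀1 hcopq₀q
  set r : ℕ := q₀ + q * k with hrdef
  set b : ℤ := p₀ + p * k with hbdef
  have hqk : q ≤ q * k := Nat.le_mul_of_pos_right q hk1
  have hqk2 : q * k ≤ q * d := Nat.mul_le_mul_left q hkd
  have hrN : N < r := by omega
  have hrpos : 0 < r := by omega
  have hrle : r ≤ (d + 1) * q := by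
    have : (d + 1) * q = q * d + q := by ring
    omega
  have det : p * (r : ℤ) - (q : ℤ) * b = 1 := by
    rw [hrdef, hbdef]
    push_cast
    rw [hcast]
    linear_combination det0
  refine ⟨(b, r), ⟨hrpos, ?_, ?_⟩, hrN⟩
  · have c1 : IsCoprime ((r : ℕ) : ℤ) b := ⟨p, -(q : ℤ), by linear_combination det⟩
    have c2 : IsCoprime ((r : ℕ) : ℤ) ((d : ℕ) : ℤ) := Nat.isCoprime_iff_coprime.mpr hkcop
    exact Int.isCoprime_iff_gcd_eq_one.mp (c1.mul_right c2)
  · have hq0R : (0 : ℝ) < (q : ℝ) := by positivity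
    have hr0R : (0 : ℝ) < (r : ℝ) := by exact_mod_cast hrpos
    have hd1 : (1 : ℝ) ≤ (d : ℝ) := by exact_mod_cast hd
    have hrleR : (r : ℝ) ≤ ((d : ℝ) + 1) * (q : ℝ) := by exact_mod_cast hrle
    have hx' : |α - (p : ℝ) / (q : ℝ)| < 1 / (q : ℝ) ^ 2 := by
      rwa [Rat.cast_def] at hx1
    have hdiff : (p : ℝ) / (q : ℝ) - (b : ℝ) / (r : ℝ) = 1 / ((q : ℝ) * (r : ℝ)) := by
      rw [div_sub_div _ _ (ne_of_gt hq0R) (ne_of_gt hr0R)]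
      congr 1
      exact_mod_cast det
    have e1 : 1 / (q : ℝ) ^ 2 ≤ ((d : ℝ) + 1) ^ 2 / (r : ℝ) ^ 2 := by
      rw [div_le_div_iff₀ (by positivity) (by positivity)]
      nlinarith
    have e2 : 1 / ((q : ℝ) * (r : ℝ)) ≤ ((d : ℝ) + 1) / (r : ℝ) ^ 2 := by
      rw [div_le_div_iff₀ (by positivity) (by positivity)]
      nlinarith
    have e3 : ((d : ℝ) + 1) ^ 2 + ((d : ℝ) + 1) ≤ 6 * (d : ℝ) ^ 2 := by nlinarith
    have e4 : ((d : ℝ) + 1) ^ 2 / (r : ℝ) ^ 2 + ((d : ℝ) + 1) / (r : ℝ) ^ 2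
        ≤ 6 * (d : ℝ) ^ 2 / (r : ℝ) ^ 2 := by
      rw [← add_div]
      gcongr
    have htri : |α - (b : ℝ) / (r : ℝ)| ≤ |α - (p : ℝ) / (q : ℝ)|
        + |(p : ℝ) / (q : ℝ) - (b : ℝ) / (r : ℝ)| := abs_sub_le _ _ _
    have habs : |(p : ℝ) / (q : ℝ) - (b : ℝ) / (r : ℝ)| = 1 / ((q : ℝ) * (r : ℝ)) := by
      rw [hdiff, abs_of_pos (by positivity)]
    calc |α - (b : ℝ) / (r : ℝ)|
        ≤ |α - (p : ℝ) / (q : ℝ)| + 1 / ((q : ℝ) * (r : ℝ)) := by rw [← habs]; exact htri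
      _ ≤ ((d : ℝ) + 1) ^ 2 / (r : ℝ) ^ 2 + ((d : ℝ) + 1) / (r : ℝ) ^ 2 := by
          linarith [hx'.le.trans e1]
      _ ≤ 6 * (d : ℝ) ^ 2 / (r : ℝ) ^ 2 := e4

theorem dirichlet_approx_coprime (d : ℕ) (hd : 0 < d) (α : ℝ) (hα : Irrational α) :
    {p : ℤ × ℕ | 0 < p.2 ∧ Int.gcd (p.2 : ℤ) (p.1 * (d : ℤ)) = 1 ∧
      |α - (p.1 : ℝ) / (p.2 : ℝ)| ≤ 6 * (d : ℝ) ^ 2 / (p.2 : ℝ) ^ 2}.Infinite := by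
  by_contra h
  rw [Set.not_infinite] at h
  obtain ⟨M, hM⟩ := (h.image Prod.snd).bddAbove
  obtain ⟨pr, hpr, hN⟩ := key_step d hd α hα M
  exact absurd (hM ⟨pr, hpr, rfl⟩) (not_le.mpr hN)
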